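/- Let (E, ≼) be a partial order on events such that: every event occurs at one of finitely many processes per view interval, the events at each process are linearly ordered with each event having only finitely many predecessors at its own process, the order is the minimal order generated by per-process order together with finitely many 'send ≺ receive' cross-process relations each event having at most two immediate predecessors, and events are stratified by views so that any predecessor of an event of view i has view ≤ i while only finitely many processes have events of view ≤ i. Then ≼ is very well founded: every event has only finitely many predecessors in E. -/

import Mathlib

/-- Abstract form of the very-well-foundedness corollary: a partial order on events in
which (1) events at each process are linearly ordered, with each event having only
finitely many predecessors at its own process, (2) each event has at most two immediate
predecessors, (3) every strict predecessor is mediated by an immediate predecessor, and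
(4) all the predecessors of a fixed event lie on finitely many processes, is very well
founded: every event has only finitely many predecessors. -/
theorem events_very_well_founded {E P : Type*} [PartialOrder E] (proc : E → P)
    (hlin : ∀ e f : E, proc e = proc f → e ≤ f ∨ f ≤ e)
    (hprocfin : ∀ e : E, {f : E | f < e ∧ proc f = proc e}.Finite)
    (himm : ∀ e : E, ∃ s : Finset E, s.card ≤ 2 ∧ ∀ f : E, f ⋖ e → f ∈ s)
    (hmed : ∀ e f : E, f < e → ∃ g : E, f ≤ g ∧ g ⋖ e)
    (hprocs : ∀ e : E, {p : P | ∃ f : E, f ≤ e ∧ proc f = p}.Finite) :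
    ∀ e : E, {f : E | f < e}.Finite := by
  intro e
  have key : ∀ p : P, {f : E | f ≤ e ∧ proc f = p}.Finite := by
    intro p
    by_contra hinf
    rw [← Set.not_infinite, not_not] at hinf
    -- descent step
    have step : ∀ x : E, {f : E | f ≤ x ∧ proc f = p}.Infinite →
        ∃ y : E, y ⋖ x ∧ {f : E | f ≤ y ∧ proc f = p}.Infinite := by
      intro x hx
      obtain ⟨s, _, hsmem⟩ := himm x
      have hx' : {f : E | f < x ∧ proc f = p}.Infinite := by
        intro hfin
        apply hx
        apply (hfin.union (Set.finite_singleton x)).subset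
        rintro f ⟨hfe, hfp⟩
        rcases lt_or_eq_of_le hfe with h | h
        · exact Or.inl ⟨h, hfp⟩
        · exact Or.inr (by simp [h])
      by_contra hno
      push_neg at hno
      have hsub : {f : E | f < x ∧ proc f = p} ⊆
          ⋃ y ∈ {y ∈ (s : Set E) | y ⋖ x}, {f : E | f ≤ y ∧ proc f = p} := by
        rintro f ⟨hf, hfp⟩
        obtain ⟨g, hfg, hg⟩ := hmed x f hf
        exact Set.mem_biUnion ⟨hsmem g hg, hg⟩ ⟨hfg, hfp⟩
      have hfin : (⋃ y ∈ {y ∈ (s : Set E) | y ⋖ x}, {f : E | f ≤ y ∧ proc f = p}).Finite := by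
        apply Set.Finite.biUnion (s.finite_toSet.subset (Set.sep_subset _ _))
        rintro y ⟨_, hy⟩
        rw [← Set.not_infinite]
        exact fun h => h (hno y hy)
      exact hx' (hfin.subset hsub)
    -- build an infinite descending cover chain
    have hch : ∀ x : {x : E // {f : E | f ≤ x ∧ proc f = p}.Infinite},
        ∃ y : {x : E // {f : E | f ≤ x ∧ proc f = p}.Infinite}, y.1 ⋖ x.1 := by
      intro x
      obtain ⟨y, hy, hy'⟩ := step x.1 x.2
      exact ⟨⟨y, hy'⟩, hy⟩
    choose nxt hnxt using hch
    set u : ℕ → {x : E // {f : E | f ≤ x ∧ proc f = p}.Infinite} :=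
      fun n => nxt^[n] ⟨e, hinf⟩ with hu
    have hcov : ∀ n, (u (n + 1)).1 ⋖ (u n).1 := by
      intro n
      have : u (n + 1) = nxt (u n) := by
        simp [hu, Function.iterate_succ_apply']
      rw [this]
      exact hnxt (u n)
    have hanti : StrictAnti fun n => (u n).1 :=
      strictAnti_nat_of_succ_lt fun n => (hcov n).lt
    have hle : ∀ n, (u n).1 ≤ e := by
      intro n
      have := hanti.antitone (Nat.zero_le n)
      simpa [hu] using this
    haveI := (hprocs e).to_subtype
    obtain ⟨q, hq⟩ := Finite.exists_infinite_fiber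
      (fun n : ℕ => (⟨proc (u n).1, ⟨(u n).1, hle n, rfl⟩⟩ :
        {p : P | ∃ f : E, f ≤ e ∧ proc f = p}))
    rw [Set.infinite_coe_iff] at hq
    obtain ⟨n0, hn0⟩ := hq.nonempty
    have hq' : (proc (u n0).1) = q.1 := by
      have := hn0
      simp only [Set.mem_preimage, Set.mem_singleton_iff] at this
      exact congrArg Subtype.val this
    have himg : ((fun n => (u n).1) '' ((_ ⁻¹' {q}) \ {n | n ≤ n0})).Infinite :=
      (hq.diff (Set.finite_le_nat n0)).image
        (Set.injOn_of_injective hanti.injective)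
    apply himg
    apply (hprocfin (u n0).1).subset
    rintro f ⟨n, ⟨hnq, hn⟩, rfl⟩
    simp only [Set.mem_setOf_eq, not_le] at hn
    constructor
    · exact hanti hn
    · have : proc (u n).1 = q.1 := by
        simp only [Set.mem_preimage, Set.mem_singleton_iff] at hnq
        exact congrArg Subtype.val hnq
      rw [this, hq']
  -- conclude
  have hsub : {f : E | f < e} ⊆
      ⋃ p ∈ {p : P | ∃ f : E, f ≤ e ∧ proc f = p}, {f : E | f ≤ e ∧ proc f = p} := by
    intro f hf
    exact Set.mem_biUnion ⟨f, le_of_lt hf, rfl⟩ ⟨le_of_lt hf, rfl⟩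
  exact (Set.Finite.biUnion (hprocs e) fun p _ => key p).subset hsub
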